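/- arXiv:2506.23413 — 8 statements merged into one kernel-verified Lean document; each statement's English description precedes it below -/
import Mathlib

section
/- In a lextensive category, for each monomorphism m : S → A, the square with top arrow [1_S,1_S] : S+S → S, left arrow m+1_S : S+S → A+S, bottom arrow [1_A,m] : A+S → A, and right arrow m : S → A is a pullback. -/
open CategoryTheory Limits

/-- In a lextensive category, for each monomorphism `m : S ⟶ A`, the square with top
`[1,1] : S+S ⟶ S`, left `m+1 : S+S ⟶ A+S`, right `m : S ⟶ A` and bottom
`[1,m] : A+S ⟶ A` is a pullback. -/
theorem mono_codiagonal_square_isPullback {C : Type*} [Category C]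
    [HasFiniteLimits C] [FinitaryExtensive C] {S A : C} (m : S ⟶ A) [Mono m] :
    IsPullback (coprod.desc (𝟙 S) (𝟙 S)) (coprod.map m (𝟙 S)) m (coprod.desc (𝟙 A) m) := by
  have vk := FinitaryExtensive.vanKampen (c := BinaryCofan.mk (coprod.inl : A ⟶ A ⨿ S) coprod.inr)
    (coprodIsCoprod A S)
  rw [BinaryCofan.isVanKampen_iff] at vk
  -- the two component squares of `m + 1` are pullbacks
  obtain ⟨hL, hR⟩ := (vk (BinaryCofan.mk (coprod.inl : S ⟶ S ⨿ S) coprod.inr) m (𝟙 S)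
    (coprod.map m (𝟙 S)) (coprod.inl_map m (𝟙 S)).symm (coprod.inr_map m (𝟙 S)).symm).mp ⟨coprodIsCoprod S S⟩
  simp only [BinaryCofan.mk_inl, BinaryCofan.mk_inr] at hL hR
  have eq : coprod.desc (𝟙 S) (𝟙 S) ≫ m = coprod.map m (𝟙 S) ≫ coprod.desc (𝟙 A) m := by
    ext <;> simp
  apply IsPullback.of_isLimit (c := PullbackCone.mk _ _ eq)
  refine PullbackCone.isLimitAux' _ fun s => ?_
  simp only [PullbackCone.mk_fst, PullbackCone.mk_snd]
  -- decompose the cone point `s.pt` as a coproduct, pulling back `s.snd` along the inclusions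
  have hc' : IsColimit (BinaryCofan.mk (pullback.fst s.snd (coprod.inl : A ⟶ A ⨿ S))
      (pullback.fst s.snd (coprod.inr : S ⟶ A ⨿ S))) :=
    ((vk (BinaryCofan.mk (pullback.fst s.snd coprod.inl) (pullback.fst s.snd coprod.inr))
      (pullback.snd s.snd coprod.inl) (pullback.snd s.snd coprod.inr) s.snd
      pullback.condition.symm pullback.condition.symm).mpr
      ⟨IsPullback.of_hasPullback _ _, IsPullback.of_hasPullback _ _⟩).some
  have hfst₁ : pullback.fst s.snd (coprod.inl : A ⟶ A ⨿ S) ≫ s.fst ≫ m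
      = pullback.snd s.snd coprod.inl := by
    rw [s.condition, pullback.condition_assoc]; erw [coprod.inl_desc, Category.comp_id]
  have hfst₂ : pullback.fst s.snd (coprod.inr : S ⟶ A ⨿ S) ≫ s.fst
      = pullback.snd s.snd coprod.inr := by
    rw [← cancel_mono m, Category.assoc, s.condition, pullback.condition_assoc]; erw [coprod.inr_desc]
  obtain ⟨l, hl₁, hl₂⟩ := BinaryCofan.IsColimit.desc' hc'
    (pullback.fst s.snd coprod.inl ≫ s.fst ≫ coprod.inl)
    (pullback.snd s.snd coprod.inr ≫ coprod.inr)
  dsimp only [BinaryCofan.mk_inl, BinaryCofan.mk_inr] at hl₁ hl₂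
  refine ⟨l, ?_, ?_, ?_⟩
  · -- `l ≫ [1,1] = s.fst`
    refine BinaryCofan.IsColimit.hom_ext hc' ?_ ?_ <;>
      dsimp only [BinaryCofan.mk_inl, BinaryCofan.mk_inr]
    · erw [← Category.assoc, hl₁, Category.assoc, Category.assoc, coprod.inl_desc, Category.comp_id]; rfl
    · erw [← Category.assoc, hl₂, Category.assoc, coprod.inr_desc, Category.comp_id, hfst₂]
  · -- `l ≫ (m + 1) = s.snd`
    refine BinaryCofan.IsColimit.hom_ext hc' ?_ ?_ <;>
      dsimp only [BinaryCofan.mk_inl, BinaryCofan.mk_inr]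
    · erw [← Category.assoc, hl₁, Category.assoc, Category.assoc, coprod.inl_map,
        ← Category.assoc (f := s.fst), ← Category.assoc, hfst₁, ← pullback.condition]; rfl
    · erw [← Category.assoc, hl₂, Category.assoc, coprod.inr_map, Category.id_comp,
        ← pullback.condition]; rfl
  · -- uniqueness
    intro u hu₁ hu₂
    refine BinaryCofan.IsColimit.hom_ext hc' ?_ ?_ <;>
      dsimp only [BinaryCofan.mk_inl, BinaryCofan.mk_inr]
    · have h : (pullback.fst s.snd coprod.inl ≫ u) ≫ coprod.map m (𝟙 S)
          = pullback.snd s.snd coprod.inl ≫ coprod.inl := by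
        erw [Category.assoc, hu₂, pullback.condition]
      have hwl := hL.lift_fst _ _ h
      have hws := hL.lift_snd _ _ h
      have key : hL.lift _ _ h = pullback.fst s.snd coprod.inl ≫ s.fst := by
        erw [← cancel_mono m, hws, Category.assoc, hfst₁]
      erw [key] at hwl
      erw [← hwl, hl₁, Category.assoc]; rfl
    · have h : (pullback.fst s.snd coprod.inr ≫ u) ≫ coprod.map m (𝟙 S)
          = pullback.snd s.snd coprod.inr ≫ coprod.inr := by
        erw [Category.assoc, hu₂, pullback.condition]
      have hwl := hR.lift_fst _ _ h
      have hws := hR.lift_snd _ _ h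
      have key : hR.lift _ _ h = pullback.snd s.snd coprod.inr := by
        simpa using hws
      erw [key] at hwl
      erw [← hwl, hl₂]; rfl
end

section
/- A finitely complete category C with an initial object is extensive if and only if: (a) C has finite coproducts; (b) binary coproducts of pullback squares are pullback squares; and (c) for each morphism f : A → B, the square with top [1_A,1_A] : A+A → A, left f+f, bottom [1_B,1_B] : B+B → B, right f is a pullback. -/
open CategoryTheory Limits

/-- Binary coproducts of pullback squares are pullback squares. -/
def CoprodOfPullbacksIsPullback (C : Type*) [Category C] [HasBinaryCoproducts C] : Prop :=
  ∀ {P X Y Z P' X' Y' Z' : C}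
    (fst : P ⟶ X) (snd : P ⟶ Y) (f : X ⟶ Z) (g : Y ⟶ Z)
    (fst' : P' ⟶ X') (snd' : P' ⟶ Y') (f' : X' ⟶ Z') (g' : Y' ⟶ Z'),
    IsPullback fst snd f g → IsPullback fst' snd' f' g' →
      IsPullback (coprod.map fst fst') (coprod.map snd snd')
        (coprod.map f f') (coprod.map g g')

attribute [local simp] coprod.inl_desc coprod.inr_desc coprod.inl_desc_assoc coprod.inr_desc_assoc

namespace ExtensiveIffAux

variable {C : Type*} [Category C]

section InitialCoprod

variable [HasInitial C] [HasBinaryCoproducts C]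

lemma isIso_inl_initial (X : C) : IsIso (coprod.inl : X ⟶ X ⨿ ⊥_ C) := by
  refine ⟨coprod.desc (𝟙 X) (initial.to X), by simp, ?_⟩
  apply coprod.hom_ext
  · simp
  · exact initial.hom_ext _ _

lemma isIso_inr_initial (Y : C) : IsIso (coprod.inr : Y ⟶ (⊥_ C) ⨿ Y) := by
  refine ⟨coprod.desc (initial.to Y) (𝟙 Y), by simp, ?_⟩
  apply coprod.hom_ext
  · exact initial.hom_ext _ _
  · simp

/-- A binary cofan which is a colimit gives an iso `A ⨿ B ≅ Q`. -/
lemma isIso_desc_of_isColimit {A B Q : C} {i₁ : A ⟶ Q} {i₂ : B ⟶ Q}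
    (h : IsColimit (BinaryCofan.mk i₁ i₂)) : IsIso (coprod.desc i₁ i₂) := by
  have e : coprod.desc i₁ i₂ = ((coprodIsCoprod A B).coconePointUniqueUpToIso h).hom := by
    apply coprod.hom_ext
    · rw [coprod.inl_desc]; exact ((coprodIsCoprod A B).comp_coconePointUniqueUpToIso_hom h
        ⟨WalkingPair.left⟩).symm
    · rw [coprod.inr_desc]; exact ((coprodIsCoprod A B).comp_coconePointUniqueUpToIso_hom h
        ⟨WalkingPair.right⟩).symm
  rw [e]
  exact Iso.isIso_hom _

end InitialCoprod

section Backward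

variable [HasFiniteLimits C] [HasInitial C] [HasFiniteCoproducts C]

variable (hb : CoprodOfPullbacksIsPullback C)
variable (hc : ∀ {A B : C} (f : A ⟶ B),
  IsPullback (coprod.desc (𝟙 A) (𝟙 A)) (coprod.map f f) f (coprod.desc (𝟙 B) (𝟙 B)))

include hb hc

/-- The key pullback square expressing universality of coproducts. -/
lemma key_pb {X Y Z : C} (f : Z ⟶ X ⨿ Y) :
    IsPullback (coprod.desc (pullback.fst f coprod.inl) (pullback.fst f coprod.inr))
      (coprod.map (pullback.snd f coprod.inl) (pullback.snd f coprod.inr)) f (𝟙 (X ⨿ Y)) := by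
  have s1 := (IsPullback.of_hasPullback f (coprod.inl : X ⟶ X ⨿ Y)).flip
  have s2 := (IsPullback.of_hasPullback f (coprod.inr : Y ⟶ X ⨿ Y)).flip
  have h12 := (hb _ _ _ _ _ _ _ _ s1 s2).flip
  have H := h12.paste_horiz (hc f)
  simpa using H

lemma isIso_desc_pb {X Y Z : C} (f : Z ⟶ X ⨿ Y) :
    IsIso (coprod.desc (pullback.fst f (coprod.inl : X ⟶ X ⨿ Y))
      (pullback.fst f (coprod.inr : Y ⟶ X ⨿ Y))) := by
  have K := key_pb hb hc f
  have T : IsPullback (𝟙 Z) f f (𝟙 (X ⨿ Y)) := IsPullback.of_horiz_isIso ⟨by simp⟩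
  have he := K.isoIsPullback_hom_fst _ _ T
  rw [Category.comp_id] at he
  rw [← he]
  infer_instance

lemma isColimit_pb_cofan {X Y Z : C} (f : Z ⟶ X ⨿ Y) :
    Nonempty (IsColimit (BinaryCofan.mk (pullback.fst f (coprod.inl : X ⟶ X ⨿ Y))
      (pullback.fst f (coprod.inr : Y ⟶ X ⨿ Y)))) := by
  have e : (coprodIsCoprod _ _).desc (BinaryCofan.mk (pullback.fst f coprod.inl)
      (pullback.fst f (coprod.inr : Y ⟶ X ⨿ Y))) =
      coprod.desc (pullback.fst f coprod.inl) (pullback.fst f coprod.inr) := by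
    apply coprod.hom_ext
    · exact ((coprodIsCoprod _ _).fac (BinaryCofan.mk (pullback.fst f coprod.inl)
        (pullback.fst f (coprod.inr : Y ⟶ X ⨿ Y))) ⟨WalkingPair.left⟩).trans (coprod.inl_desc _ _).symm
    · exact ((coprodIsCoprod _ _).fac (BinaryCofan.mk (pullback.fst f coprod.inl)
        (pullback.fst f (coprod.inr : Y ⟶ X ⨿ Y))) ⟨WalkingPair.right⟩).trans (coprod.inr_desc _ _).symm
  have : IsIso ((coprodIsCoprod _ _).desc (BinaryCofan.mk (pullback.fst f coprod.inl)
      (pullback.fst f (coprod.inr : Y ⟶ X ⨿ Y)))) := by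
    rw [e]
    exact isIso_desc_pb hb hc f
  exact ⟨IsColimit.ofPointIso (coprodIsCoprod _ _)⟩

lemma isInitial_of_to_initial {Z : C} (g : Z ⟶ ⊥_ C) : Nonempty (IsInitial Z) := by
  have H := hc g
  have h0 : (coprod.inl : Z ⟶ Z ⨿ Z) = coprod.inr := by
    apply H.hom_ext
    · simp
    · rw [coprod.inl_map, coprod.inr_map, initial.hom_ext (coprod.inl : ⊥_ C ⟶ _) coprod.inr]
  refine ⟨IsInitial.ofUniqueHom (fun Y => g ≫ initial.to Y) fun Y m => ?_⟩
  have key : ∀ u v : Z ⟶ Y, u = v := by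
    intro u v
    have := congrArg (fun t => t ≫ coprod.desc u v) h0
    simpa using this
  exact key m _

lemma isPullback_initial_map {Y' Y : C} (αY : Y' ⟶ Y) :
    IsPullback (initial.to Y') (𝟙 (⊥_ C)) αY (initial.to Y) := by
  have w : initial.to Y' ≫ αY = 𝟙 (⊥_ C) ≫ initial.to Y := initial.hom_ext _ _
  refine ⟨⟨w⟩, ⟨PullbackCone.IsLimit.mk w
    (fun s => ((isInitial_of_to_initial hb hc s.snd).some.to _)) ?_ ?_ ?_⟩⟩
  · intro s
    exact ((isInitial_of_to_initial hb hc s.snd).some).hom_ext _ _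
  · intro s
    exact ((isInitial_of_to_initial hb hc s.snd).some).hom_ext _ _
  · intro s m _ _
    exact ((isInitial_of_to_initial hb hc s.snd).some).hom_ext _ _

lemma inl_square {X' X Y' Y : C} (αX : X' ⟶ X) (αY : Y' ⟶ Y) :
    IsPullback (coprod.inl : X' ⟶ X' ⨿ Y') αX (coprod.map αX αY)
      (coprod.inl : X ⟶ X ⨿ Y) := by
  have S1 : IsPullback (𝟙 X') αX αX (𝟙 X) := IsPullback.of_horiz_isIso ⟨by simp⟩
  have S2 := isPullback_initial_map (C := C) hb hc αY
  have M := hb _ _ _ _ _ _ _ _ S1 S2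
  haveI := isIso_inl_initial (C := C) X'
  haveI := isIso_inl_initial (C := C) X
  have L : IsPullback (coprod.inl : X' ⟶ X' ⨿ ⊥_ C) αX (coprod.map αX (𝟙 (⊥_ C)))
      (coprod.inl : X ⟶ X ⨿ ⊥_ C) := IsPullback.of_horiz_isIso ⟨by simp⟩
  have := L.paste_horiz M
  simpa using this

lemma inr_square {X' X Y' Y : C} (αX : X' ⟶ X) (αY : Y' ⟶ Y) :
    IsPullback (coprod.inr : Y' ⟶ X' ⨿ Y') αY (coprod.map αX αY)
      (coprod.inr : Y ⟶ X ⨿ Y) := by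
  have S1 : IsPullback (𝟙 Y') αY αY (𝟙 Y) := IsPullback.of_horiz_isIso ⟨by simp⟩
  have S2 := isPullback_initial_map (C := C) hb hc αX
  have M := hb _ _ _ _ _ _ _ _ S2 S1
  haveI := isIso_inr_initial (C := C) Y'
  haveI := isIso_inr_initial (C := C) Y
  have L : IsPullback (coprod.inr : Y' ⟶ (⊥_ C) ⨿ Y') αY (coprod.map (𝟙 (⊥_ C)) αY)
      (coprod.inr : Y ⟶ (⊥_ C) ⨿ Y) := IsPullback.of_horiz_isIso ⟨by simp⟩
  have := L.paste_horiz M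
  simpa using this

end Backward

section Forward

variable [FinitaryExtensive C]

lemma ext_inl_inr_square {Y Y' Z Z' : C} (g : Y ⟶ Z) (g' : Y' ⟶ Z') :
    IsPullback (coprod.inl : Y ⟶ Y ⨿ Y') g (coprod.map g g') (coprod.inl : Z ⟶ Z ⨿ Z') ∧
    IsPullback (coprod.inr : Y' ⟶ Y ⨿ Y') g' (coprod.map g g') (coprod.inr : Z' ⟶ Z ⨿ Z') := by
  exact ((BinaryCofan.isVanKampen_iff _).mp
    (FinitaryExtensive.van_kampen' _ (coprodIsCoprod Z Z'))
    (BinaryCofan.mk coprod.inl coprod.inr) g g' (coprod.map g g')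
    (coprod.inl_map g g').symm (coprod.inr_map g g').symm).mp ⟨coprodIsCoprod Y Y'⟩

lemma ext_decompose {X X' Q : C} (q : Q ⟶ X ⨿ X') :
    Nonempty (IsColimit (BinaryCofan.mk (pullback.fst q (coprod.inl : X ⟶ X ⨿ X'))
      (pullback.fst q (coprod.inr : X' ⟶ X ⨿ X')))) := by
  refine (FinitaryExtensive.van_kampen' _ (coprodIsCoprod X X')).isUniversal
    (BinaryCofan.mk (pullback.fst q coprod.inl) (pullback.fst q coprod.inr))
    (mapPair (pullback.snd q coprod.inl) (pullback.snd q coprod.inr)) q ?_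
    (mapPair_equifibered _) ?_
  · ext ⟨⟨⟩⟩
    · exact (pullback.condition (f := q) (g := coprod.inl)).symm
    · exact (pullback.condition (f := q) (g := coprod.inr)).symm
  · rintro ⟨⟨⟩⟩
    · exact IsPullback.of_hasPullback q coprod.inl
    · exact IsPullback.of_hasPullback q coprod.inr

end Forward

end ExtensiveIffAux

open ExtensiveIffAux in
/-- A finitely complete category with an initial object and finite coproducts is
extensive if and only if binary coproducts of pullback squares are pullback squares and
for each morphism `f : A ⟶ B` the codiagonal square over `f` is a pullback. -/
theorem finitaryExtensive_iff_conditions (C : Type*) [Category C]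
    [HasFiniteLimits C] [HasInitial C] [HasFiniteCoproducts C] :
    FinitaryExtensive C ↔
      HasFiniteCoproducts C ∧ CoprodOfPullbacksIsPullback C ∧
        (∀ {A B : C} (f : A ⟶ B),
          IsPullback (coprod.desc (𝟙 A) (𝟙 A)) (coprod.map f f) f
            (coprod.desc (𝟙 B) (𝟙 B))) := by
  constructor
  · intro H
    refine ⟨inferInstance, ?_, ?_⟩
    · -- coproducts of pullbacks are pullbacks
      intro P X Y Z P' X' Y' Z' fst snd f g fst' snd' f' g' h h'
      -- the big pullback
      have sQ := IsPullback.of_hasPullback (coprod.map f f') (coprod.map g g')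
      set q1 := pullback.fst (coprod.map f f') (coprod.map g g') with hq1
      set q2 := pullback.snd (coprod.map f f') (coprod.map g g') with hq2
      have pb1 := IsPullback.of_hasPullback q1 (coprod.inl : X ⟶ X ⨿ X')
      have pb2 := IsPullback.of_hasPullback q1 (coprod.inr : X' ⟶ X ⨿ X')
      have hQ1 : IsPullback (pullback.snd q1 (coprod.inl : X ⟶ X ⨿ X'))
          (pullback.fst q1 (coprod.inl : X ⟶ X ⨿ X') ≫ q2)
          (f ≫ coprod.inl) (coprod.map g g') := by
        have := pb1.flip.paste_vert sQ
        simpa using this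
      have hQ2 : IsPullback (pullback.snd q1 (coprod.inr : X' ⟶ X ⨿ X'))
          (pullback.fst q1 (coprod.inr : X' ⟶ X ⨿ X') ≫ q2)
          (f' ≫ coprod.inr) (coprod.map g g') := by
        have := pb2.flip.paste_vert sQ
        simpa using this
      have hP : IsPullback fst (snd ≫ coprod.inl) (f ≫ coprod.inl) (coprod.map g g') :=
        h.paste_vert (ext_inl_inr_square g g').1.flip
      have hP' : IsPullback fst' (snd' ≫ coprod.inr) (f' ≫ coprod.inr) (coprod.map g g') :=
        h'.paste_vert (ext_inl_inr_square g g').2.flip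
      have hcol := (ext_decompose q1).some
      haveI hiso : IsIso (coprod.desc (pullback.fst q1 (coprod.inl : X ⟶ X ⨿ X'))
          (pullback.fst q1 (coprod.inr : X' ⟶ X ⨿ X'))) := isIso_desc_of_isColimit hcol
      haveI : IsIso (coprod.desc
          ((hP.isoIsPullback _ _ hQ1).hom ≫ pullback.fst q1 coprod.inl)
          ((hP'.isoIsPullback _ _ hQ2).hom ≫ pullback.fst q1 coprod.inr)) := by
        rw [← coprod.map_desc]
        infer_instance
      refine IsPullback.of_iso_pullback ⟨?_⟩ (asIso (coprod.desc
          ((hP.isoIsPullback _ _ hQ1).hom ≫ pullback.fst q1 coprod.inl)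
          ((hP'.isoIsPullback _ _ hQ2).hom ≫ pullback.fst q1 coprod.inr))) ?_ ?_
      · rw [coprod.map_map, coprod.map_map, h.w, h'.w]
      · rw [asIso_hom]
        apply coprod.hom_ext
        · simp [← hq1, pb1.w, hP.isoIsPullback_hom_fst _ _ hQ1]
        · simp [← hq1, pb2.w, hP'.isoIsPullback_hom_fst _ _ hQ2]
      · rw [asIso_hom]
        apply coprod.hom_ext
        · simp [hq1, hq2, hP.isoIsPullback_hom_snd _ _ hQ1]
        · simp [hq1, hq2, hP'.isoIsPullback_hom_snd _ _ hQ2]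
    · -- the codiagonal squares
      intro A B f
      have sQ := IsPullback.of_hasPullback f (coprod.desc (𝟙 B) (𝟙 B))
      set q1 := pullback.fst f (coprod.desc (𝟙 B) (𝟙 B)) with hq1
      set q2 := pullback.snd f (coprod.desc (𝟙 B) (𝟙 B)) with hq2
      have pb1 := IsPullback.of_hasPullback q2 (coprod.inl : B ⟶ B ⨿ B)
      have pb2 := IsPullback.of_hasPullback q2 (coprod.inr : B ⟶ B ⨿ B)
      have hQ1 : IsPullback (pullback.snd q2 (coprod.inl : B ⟶ B ⨿ B))
          (pullback.fst q2 (coprod.inl : B ⟶ B ⨿ B) ≫ q1) (𝟙 B) f := by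
        have := pb1.flip.paste_vert sQ.flip
        simpa using this
      have hQ2 : IsPullback (pullback.snd q2 (coprod.inr : B ⟶ B ⨿ B))
          (pullback.fst q2 (coprod.inr : B ⟶ B ⨿ B) ≫ q1) (𝟙 B) f := by
        have := pb2.flip.paste_vert sQ.flip
        simpa using this
      have T : IsPullback f (𝟙 A) (𝟙 B) f := IsPullback.of_vert_isIso ⟨by simp⟩
      have he₁ : (hQ1.isoIsPullback _ _ T).inv ≫
          pullback.fst q2 (coprod.inl : B ⟶ B ⨿ B) ≫ q1 = 𝟙 A := by
        have := hQ1.isoIsPullback_hom_snd _ _ T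
        rw [Category.comp_id] at this
        rw [Iso.inv_comp_eq, Category.comp_id]
        exact this.symm
      have he₂ : (hQ2.isoIsPullback _ _ T).inv ≫
          pullback.fst q2 (coprod.inr : B ⟶ B ⨿ B) ≫ q1 = 𝟙 A := by
        have := hQ2.isoIsPullback_hom_snd _ _ T
        rw [Category.comp_id] at this
        rw [Iso.inv_comp_eq, Category.comp_id]
        exact this.symm
      have hb₁ : (hQ1.isoIsPullback _ _ T).inv ≫
          pullback.snd q2 (coprod.inl : B ⟶ B ⨿ B) = f := by
        have := hQ1.isoIsPullback_hom_fst _ _ T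
        rw [Iso.inv_comp_eq]
        exact this.symm
      have hb₂ : (hQ2.isoIsPullback _ _ T).inv ≫
          pullback.snd q2 (coprod.inr : B ⟶ B ⨿ B) = f := by
        have := hQ2.isoIsPullback_hom_fst _ _ T
        rw [Iso.inv_comp_eq]
        exact this.symm
      have hcol := (ext_decompose q2).some
      haveI hiso : IsIso (coprod.desc (pullback.fst q2 (coprod.inl : B ⟶ B ⨿ B))
          (pullback.fst q2 (coprod.inr : B ⟶ B ⨿ B))) := isIso_desc_of_isColimit hcol
      haveI : IsIso (coprod.desc
          ((hQ1.isoIsPullback _ _ T).inv ≫ pullback.fst q2 coprod.inl)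
          ((hQ2.isoIsPullback _ _ T).inv ≫ pullback.fst q2 coprod.inr)) := by
        rw [← coprod.map_desc]
        infer_instance
      refine IsPullback.of_iso_pullback ⟨?_⟩ (asIso (coprod.desc
          ((hQ1.isoIsPullback _ _ T).inv ≫ pullback.fst q2 coprod.inl)
          ((hQ2.isoIsPullback _ _ T).inv ≫ pullback.fst q2 coprod.inr))) ?_ ?_
      · apply coprod.hom_ext <;> simp
      · rw [asIso_hom]
        apply coprod.hom_ext
        · rw [coprod.inl_desc_assoc, Category.assoc, ← hq1, he₁, coprod.inl_desc]
        · rw [coprod.inr_desc_assoc, Category.assoc, ← hq1, he₂, coprod.inr_desc]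
      · rw [asIso_hom]
        apply coprod.hom_ext
        · simp [← hq2, pb1.w, hb₁]
        · simp [← hq2, pb2.w, hb₂]
  · rintro ⟨-, hb, hc⟩
    constructor
    intro X Y c hcolim
    have VK : IsVanKampenColimit (BinaryCofan.mk (coprod.inl : X ⟶ X ⨿ Y) coprod.inr) := by
      apply BinaryCofan.isVanKampen_mk _ (fun X Y => BinaryCofan.mk coprod.inl coprod.inr)
        (fun X Y => coprodIsCoprod X Y)
        (fun {X Y Z} f g => PullbackCone.mk _ _ (pullback.condition (f := f) (g := g)))
        (fun {X Y Z} f g => pullbackIsPullback f g)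
      · intro X' Y' αX αY f hX hY
        obtain rfl : f = coprod.map αX αY := by
          apply coprod.hom_ext
          · exact hX.symm.trans (coprod.inl_map αX αY).symm
          · exact hY.symm.trans (coprod.inr_map αX αY).symm
        exact ⟨inl_square hb hc αX αY, inr_square hb hc αX αY⟩
      · intro Z f
        exact (isColimit_pb_cofan hb hc f).some
    exact VK.of_iso ((coprodIsCoprod X Y).uniqueUpToIso hcolim)
end

section
/- In a finitely complete category with an initial object where, for each morphism i : I → 0 to the initial object, the square with top [1_I,1_I] : I+I → I, left i+i : I+I → 0+0, bottom [1_0,1_0] : 0+0 → 0, right i is a pullback, the initial object is strict: any morphism I → 0 is an isomorphism. -/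
open CategoryTheory Limits

/-- In a finitely complete category with an initial object and binary coproducts, if for
every morphism `i : I ⟶ ⊥` the codiagonal square over `i` is a pullback, then the
initial object is strict: every morphism into it is an isomorphism. -/
theorem initial_strict_of_codiagonal_pullbacks {C : Type*} [Category C]
    [HasFiniteLimits C] [HasInitial C] [HasBinaryCoproducts C]
    (h : ∀ {I : C} (i : I ⟶ ⊥_ C),
      IsPullback (coprod.desc (𝟙 I) (𝟙 I)) (coprod.map i i) i
        (coprod.desc (𝟙 (⊥_ C)) (𝟙 (⊥_ C)))) :
    ∀ {I : C} (i : I ⟶ ⊥_ C), IsIso i := by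
  intro I i
  -- First, show `coprod.inl = coprod.inr : I ⟶ I ⨿ I` using the pullback property.
  have hinj : (coprod.inl : I ⟶ I ⨿ I) = coprod.inr := by
    apply PullbackCone.IsLimit.hom_ext (h i).isLimit
    · erw [coprod.inl_desc, coprod.inr_desc]
    · simp only [PullbackCone.mk_snd, IsPullback.cone_snd, coprod.inl_map, coprod.inr_map]
      erw [coprod.inl_map, coprod.inr_map]
      congr 1
      apply Subsingleton.elim
  -- Hence any two morphisms out of `I` agree.
  have key : ∀ {X : C} (f g : I ⟶ X), f = g := by
    intro X f g
    have := congrArg (· ≫ coprod.desc f g) hinj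
    simpa only [coprod.inl_desc, coprod.inr_desc] using this
  refine ⟨initial.to I, key _ _, Subsingleton.elim _ _⟩
end

section
/- In an additive category, for each regular epimorphism p : E → B, the square with top [1_E,1_E] : E⊕E → E, left p⊕p : E⊕E → B⊕B, bottom [1_B,1_B] : B⊕B → B, right p : E → B is a feeble pullback, i.e., if the category has the relevant pullback, the unique induced morphism from E⊕E into the pullback of [1_B,1_B] along p is a regular epimorphism. -/
open CategoryTheory Limits

/-- A morphism equal to `e.hom ≫ q ≫ e'.hom` with `q` a regular epi and `e`, `e'` isos is a
regular epi. -/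
noncomputable def regularEpiOfIsoCompIso {C : Type*} [Category C] {X Y X' Y' : C}
    (q : X ⟶ Y) (hq : RegularEpi q) (e : X' ≅ X) (e' : Y ≅ Y') (f : X' ⟶ Y')
    (hf : f = e.hom ≫ q ≫ e'.hom) : RegularEpi f where
  W := hq.W
  left := hq.left ≫ e.inv
  right := hq.right ≫ e.inv
  w := by simp [hf, hq.w_assoc]
  isColimit := by
    refine Cofork.IsColimit.mk _
      (fun s => e'.inv ≫ (hq.desc' (e.inv ≫ s.π) (by simpa using s.condition)).1)
      (fun s => ?_) (fun s m hm => ?_)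
    · have hd := (hq.desc' (e.inv ≫ s.π) (by simpa using s.condition)).2
      show f ≫ e'.inv ≫ _ = s.π
      rw [hf]
      simp [hd]
    · have hd := (hq.desc' (e.inv ≫ s.π) (by simpa using s.condition)).2
      have hm' : f ≫ m = s.π := hm
      have h2 : q ≫ (e'.hom ≫ m) = e.inv ≫ s.π := by
        rw [← hm', hf]; simp
      have hepi : (hq.desc' (e.inv ≫ s.π) (by simpa using s.condition)).1
          = e'.hom ≫ m := by
        haveI := hq.epi; apply (cancel_epi q).1
        rw [hd, h2]
      show m = e'.inv ≫ _
      rw [hepi]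
      simp

/-- `𝟙 X ⊞ p` is a regular epi when `p` is. -/
noncomputable def regularEpiBiprodMapId {C : Type*} [Category C] [Preadditive C]
    [HasBinaryBiproducts C] {X E B : C} (p : E ⟶ B) (hp : RegularEpi p) :
    RegularEpi (biprod.map (𝟙 X) p) where
  W := X ⊞ hp.W
  left := biprod.map (𝟙 X) hp.left
  right := biprod.map (𝟙 X) hp.right
  w := by ext <;> simp [hp.w]
  isColimit := by
    refine Cofork.IsColimit.mk _
      (fun s => biprod.desc (biprod.inl ≫ s.π)
        (hp.desc' (biprod.inr ≫ s.π) (by simpa using biprod.inr ≫= s.condition)).1)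
      (fun s => ?_) (fun s m hm => ?_)
    · have hd := (hp.desc' (biprod.inr ≫ s.π)
        (by simpa using biprod.inr ≫= s.condition)).2
      show biprod.map (𝟙 X) p ≫ _ = s.π
      apply biprod.hom_ext'
      · simp
      · simp [hd]
    · have hd := (hp.desc' (biprod.inr ≫ s.π)
        (by simpa using biprod.inr ≫= s.condition)).2
      have hm' : biprod.map (𝟙 X) p ≫ m = s.π := hm
      apply biprod.hom_ext'
      · have := biprod.inl ≫= hm'
        simpa using this
      · have h2 := biprod.inr ≫= hm'
        simp only [biprod.inr_map_assoc, Category.id_comp] at h2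
        simp only [biprod.inr_desc]
        haveI := hp.epi; apply (cancel_epi p).1
        rw [hd]
        simpa using h2

/-- In an additive category, for each regular epimorphism `p : E ⟶ B`, provided the
pullback of `[1,1] : B⊞B ⟶ B` along `p` exists, the square with top `[1,1] : E⊞E ⟶ E`,
left `p⊞p`, right `p` and bottom `[1,1] : B⊞B ⟶ B` is a feeble pullback: the induced
comparison morphism into the pullback is a regular epimorphism. -/
theorem additive_regularEpi_square_feeble_pullback {C : Type*} [Category C]
    [Preadditive C] [HasBinaryBiproducts C] {E B : C} (p : E ⟶ B) [IsRegularEpi p]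
    [HasPullback p (biprod.desc (𝟙 B) (𝟙 B))]
    (w : biprod.desc (𝟙 E) (𝟙 E) ≫ p = biprod.map p p ≫ biprod.desc (𝟙 B) (𝟙 B)) :
    Nonempty (RegularEpi
      (pullback.lift (biprod.desc (𝟙 E) (𝟙 E)) (biprod.map p p) w :
        E ⊞ E ⟶ pullback p (biprod.desc (𝟙 B) (𝟙 B)))) := by
  -- the "shear" automorphism of `E ⊞ E`
  let e : E ⊞ E ≅ E ⊞ E :=
    { hom := biprod.lift (biprod.fst + biprod.snd) biprod.fst
      inv := biprod.lift biprod.snd (biprod.fst - biprod.snd)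
      hom_inv_id := by ext <;> simp
      inv_hom_id := by ext <;> simp }
  have hc : (pullback.fst p (biprod.desc (𝟙 B) (𝟙 B))) ≫ p =
      pullback.snd p (biprod.desc (𝟙 B) (𝟙 B)) ≫ biprod.fst +
      pullback.snd p (biprod.desc (𝟙 B) (𝟙 B)) ≫ biprod.snd := by
    have h := pullback.condition (f := p) (g := biprod.desc (𝟙 B) (𝟙 B))
    rw [h]
    rw [← Preadditive.comp_add]
    congr 1
    ext <;> simp
  -- the iso `E ⊞ B ≅ pullback`
  let g : E ⊞ B ≅ pullback p (biprod.desc (𝟙 B) (𝟙 B)) :=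
    { hom := pullback.lift biprod.fst
        (biprod.lift biprod.snd (biprod.fst ≫ p - biprod.snd)) (by ext <;> simp)
      inv := biprod.lift (pullback.fst p (biprod.desc (𝟙 B) (𝟙 B)))
        (pullback.snd p (biprod.desc (𝟙 B) (𝟙 B)) ≫ biprod.fst)
      hom_inv_id := by ext <;> simp [pullback.lift_fst, pullback.lift_snd, pullback.lift_fst_assoc, pullback.lift_snd_assoc]
      inv_hom_id := by
        apply pullback.hom_ext
        · simp [pullback.lift_fst, pullback.lift_snd, pullback.lift_fst_assoc, pullback.lift_snd_assoc]
        · apply biprod.hom_ext <;> simp [hc, pullback.lift_fst, pullback.lift_snd, pullback.lift_fst_assoc, pullback.lift_snd_assoc] }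
  let hb : RegularEpi (biprod.map (𝟙 E) p) := regularEpiBiprodMapId p (IsRegularEpi.getStruct p)
  refine ⟨regularEpiOfIsoCompIso (biprod.map (𝟙 E) p) hb e g _ ?_⟩
  apply pullback.hom_ext
  · apply biprod.hom_ext' <;> simp [e, g, pullback.lift_fst, pullback.lift_snd, pullback.lift_fst_assoc, pullback.lift_snd_assoc]
  · apply biprod.hom_ext' <;> apply biprod.hom_ext <;> simp [e, g, pullback.lift_fst, pullback.lift_snd, pullback.lift_fst_assoc, pullback.lift_snd_assoc]
end

section
/- In a pointed finitely complete category with finite coproducts in which binary coproducts of pullback squares are pullback squares, binary coproducts are biproducts: for all objects A, B, the square with top [1_A,0] : A+B → A, left [0,1_B] : A+B → B, and with both maps to the zero object, is a pullback, so A+B is also a product of A and B. -/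
open CategoryTheory Limits ZeroObject

/-- In a pointed finitely complete category with finite coproducts in which binary
coproducts of pullback squares are pullback squares, binary coproducts are biproducts:
the square with top `[1,0] : A+B ⟶ A`, left `[0,1] : A+B ⟶ B` and both remaining maps
to the zero object is a pullback, so `A+B` is also a product of `A` and `B`. -/
theorem coproducts_are_biproducts {C : Type*} [Category C]
    [HasZeroObject C] [HasZeroMorphisms C] [HasFiniteLimits C] [HasFiniteCoproducts C]
    (hco : CoprodOfPullbacksIsPullback C) (A B : C) :
    IsPullback (coprod.desc (𝟙 A) 0) (coprod.desc 0 (𝟙 B)) (0 : A ⟶ 0) (0 : B ⟶ 0) ∧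
      Nonempty (IsLimit
        (BinaryFan.mk (coprod.desc (𝟙 A) 0 : A ⨿ B ⟶ A) (coprod.desc 0 (𝟙 B)))) := by
  have h₁ : IsPullback (𝟙 A) (0 : A ⟶ 0) (0 : A ⟶ 0) (𝟙 (0 : C)) := by
    apply IsPullback.of_horiz_isIso
    constructor
    simp
  have h₂ : IsPullback (0 : B ⟶ 0) (𝟙 B) (𝟙 (0 : C)) (0 : B ⟶ 0) := by
    apply IsPullback.of_vert_isIso
    constructor
    simp
  have h := hco _ _ _ _ _ _ _ _ h₁ h₂
  have hzz : IsZero ((0 : C) ⨿ (0 : C)) :=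
    (isZero_zero C).of_iso (zeroCoprodIso (0 : C))
  have key : IsPullback (coprod.desc (𝟙 A) 0) (coprod.desc 0 (𝟙 B))
      (0 : A ⟶ 0) (0 : B ⟶ 0) := by
    refine h.of_iso (Iso.refl _) (coprodZeroIso A) (zeroCoprodIso B)
      (zeroCoprodIso (0 : C)) ?_ ?_ ?_ ?_
    · apply coprod.hom_ext
      · simp
        exact (coprod.inl_desc _ _).symm
      · simp
        exact (coprod.inr_desc _ _).symm
    · apply coprod.hom_ext
      · simp
        exact (coprod.inl_desc _ _).symm
      · simp
        exact (coprod.inr_desc _ _).symm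
    · exact (isZero_zero C).eq_of_tgt _ _
    · exact (isZero_zero C).eq_of_tgt _ _
  refine ⟨key, ⟨?_⟩⟩
  have := isProductOfIsTerminalIsPullback (0 : A ⟶ 0) (0 : B ⟶ 0)
    (coprod.desc (𝟙 A) 0) (coprod.desc 0 (𝟙 B)) (isZero_zero C).isTerminal ?_
  · exact this
  · exact key.isLimit.ofIsoLimit (PullbackCone.ext (Iso.refl _) (by exact (Category.id_comp _).symm) (by exact (Category.id_comp _).symm))
end

section
/- In a regular category, the horizontal composite of two feeble pullback squares is a feeble pullback square. -/
open CategoryTheory Limits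

/-- A commutative square (top `fst`, left `snd`, right `f`, bottom `g`) is a feeble
pullback if the canonical comparison morphism into the pullback is a regular
epimorphism. -/
def IsFeeblePullback {C : Type*} [CategoryTheory.Category C] {P X Y Z : C}
    (fst : P ⟶ X) (snd : P ⟶ Y) (f : X ⟶ Z) (g : Y ⟶ Z)
    [CategoryTheory.Limits.HasPullback f g] : Prop :=
  ∃ w : fst ≫ f = snd ≫ g,
    Nonempty (CategoryTheory.RegularEpi (CategoryTheory.Limits.pullback.lift fst snd w))

/-- Regular epimorphisms are stable under pullback. -/
def RegularEpisPullbackStable (C : Type*) [CategoryTheory.Category C]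
    [CategoryTheory.Limits.HasPullbacks C] : Prop :=
  ∀ {X Y Z : C} (f : X ⟶ Z) (g : Y ⟶ Z), CategoryTheory.RegularEpi g →
    Nonempty (CategoryTheory.RegularEpi (CategoryTheory.Limits.pullback.fst f g))

/-- Kernel pairs admit coequalizers. -/
def HasKernelPairCoequalizers (C : Type*) [CategoryTheory.Category C]
    [CategoryTheory.Limits.HasPullbacks C] : Prop :=
  ∀ {X Y : C} (f : X ⟶ Y),
    CategoryTheory.Limits.HasCoequalizer (CategoryTheory.Limits.pullback.fst f f)
      (CategoryTheory.Limits.pullback.snd f f)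

section Aux
variable {C : Type*} [Category C]

/-- A regular epi composed with an iso is a regular epi. -/
noncomputable def regularEpiCompIso {X Y Z : C} (e : X ⟶ Y) (i : Y ⟶ Z)
    (re : RegularEpi e) [IsIso i] : RegularEpi (e ≫ i) where
  W := re.W
  left := re.left
  right := re.right
  w := by rw [← Category.assoc, ← Category.assoc, re.w]
  isColimit := Cofork.IsColimit.mk' _ fun s => by
    have hc : re.left ≫ s.π = re.right ≫ s.π := s.condition
    obtain ⟨d, hd⟩ := Cofork.IsColimit.desc' re.isColimit s.π hc
    simp only [Cofork.π_ofπ] at hd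
    refine ⟨inv i ≫ d, ?_, ?_⟩
    · simp only [Cofork.π_ofπ, Category.assoc, IsIso.hom_inv_id_assoc, hd]
    · intro m hm
      haveI : Epi e := RegularEpi.epi e re
      haveI : Epi (e ≫ i) := epi_comp e i
      apply (cancel_epi (e ≫ i)).mp
      simp only [Cofork.π_ofπ] at hm
      rw [hm]
      simp only [Category.assoc, IsIso.hom_inv_id_assoc, hd]

/-- An iso composed with a regular epi is a regular epi. -/
noncomputable def regularEpiIsoComp {V X Y : C} (i : V ⟶ X) (e : X ⟶ Y)
    [IsIso i] (re : RegularEpi e) : RegularEpi (i ≫ e) where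
  W := re.W
  left := re.left ≫ inv i
  right := re.right ≫ inv i
  w := by simp only [Category.assoc, IsIso.inv_hom_id_assoc, re.w]
  isColimit := Cofork.IsColimit.mk' _ fun s => by
    have hc : re.left ≫ inv i ≫ s.π = re.right ≫ inv i ≫ s.π := by
      have := s.condition
      simpa only [Category.assoc] using this
    obtain ⟨d, hd⟩ := Cofork.IsColimit.desc' re.isColimit (inv i ≫ s.π) hc
    simp only [Cofork.π_ofπ] at hd
    refine ⟨d, ?_, ?_⟩
    · simp only [Cofork.π_ofπ, Category.assoc, hd, IsIso.hom_inv_id_assoc]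
    · intro m hm
      haveI : Epi e := RegularEpi.epi e re
      haveI : Epi (i ≫ e) := epi_comp i e
      apply (cancel_epi (i ≫ e)).mp
      simp only [Cofork.π_ofπ] at hm
      rw [hm]
      simp only [Category.assoc, hd, IsIso.hom_inv_id_assoc]

variable [HasPullbacks C]

/-- A pullback of a regular epi along any morphism is a regular epi, assuming stability. -/
theorem regularEpi_of_isPullback (hstab : RegularEpisPullbackStable C)
    {P X Y Z : C} {fst : P ⟶ X} {snd : P ⟶ Y} {f : X ⟶ Z} {g : Y ⟶ Z}
    (h : IsPullback fst snd f g) (hg : RegularEpi g) : Nonempty (RegularEpi fst) := by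
  obtain ⟨hre⟩ := hstab f g hg
  haveI := hre
  have : fst = h.isoPullback.hom ≫ pullback.fst f g := (h.isoPullback_hom_fst).symm
  rw [this]
  exact ⟨regularEpiIsoComp _ _ hre⟩

/-- Composition of regular epis is a regular epi in a regular category. -/
theorem regularEpi_comp_regularEpi (hcoeq : HasKernelPairCoequalizers C)
    (hstab : RegularEpisPullbackStable C)
    {X Y Z : C} (e₁ : X ⟶ Y) (e₂ : Y ⟶ Z) (re₁ : RegularEpi e₁) (re₂ : RegularEpi e₂) :
    Nonempty (RegularEpi (e₁ ≫ e₂)) := by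
  haveI := isRegularEpi_of_regularEpi re₁; haveI := isRegularEpi_of_regularEpi re₂
  set e := e₁ ≫ e₂ with he
  haveI := hcoeq e
  set a := pullback.fst e e
  set b := pullback.snd e e
  set q := coequalizer.π a b with hq
  set m := coequalizer.desc e pullback.condition with hm
  have hqm : q ≫ m = e := coequalizer.π_desc _ _
  -- the map v : pullback e e ⟶ pullback e m
  have hvw : a ≫ e = (b ≫ q) ≫ m := by
    rw [Category.assoc, hqm]; exact pullback.condition
  set v := pullback.lift a (b ≫ q) hvw with hv
  have hbig₁ : IsPullback (v ≫ pullback.fst e m) b e (q ≫ m) := by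
    rw [show v ≫ pullback.fst e m = a from pullback.lift_fst _ _ _, hqm]
    exact IsPullback.of_hasPullback e e
  have hPv : IsPullback v b (pullback.snd e m) q :=
    hbig₁.of_right (pullback.lift_snd _ _ _) (IsPullback.of_hasPullback e m)
  obtain ⟨hrev⟩ := regularEpi_of_isPullback hstab hPv (coequalizerRegular a b)
  -- the map w : pullback e m ⟶ pullback m m
  have hww : (pullback.fst e m ≫ q) ≫ m = pullback.snd e m ≫ m := by
    rw [Category.assoc, hqm]; exact pullback.condition
  set w := pullback.lift (pullback.fst e m ≫ q) (pullback.snd e m) hww with hw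
  have hbig₂ : IsPullback (w ≫ pullback.snd m m) (pullback.fst e m) m (q ≫ m) := by
    rw [show w ≫ pullback.snd m m = pullback.snd e m from pullback.lift_snd _ _ _, hqm]
    exact (IsPullback.of_hasPullback e m).flip
  have hPw : IsPullback w (pullback.fst e m) (pullback.fst m m) q :=
    hbig₂.of_right (pullback.lift_fst _ _ _) (IsPullback.of_hasPullback m m).flip
  obtain ⟨hrew⟩ := regularEpi_of_isPullback hstab hPw (coequalizerRegular a b)
  haveI := isRegularEpi_of_regularEpi hrev; haveI := isRegularEpi_of_regularEpi hrew
  -- the induced map on kernel pairs is epi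
  have huu : (a ≫ q) ≫ m = (b ≫ q) ≫ m := by
    rw [Category.assoc, Category.assoc, hqm]; exact pullback.condition
  have huvw : pullback.lift (a ≫ q) (b ≫ q) huu = v ≫ w := by
    apply pullback.hom_ext
    · rw [pullback.lift_fst, Category.assoc, pullback.lift_fst, pullback.lift_fst_assoc]
    · rw [pullback.lift_snd, Category.assoc, pullback.lift_snd, pullback.lift_snd]
  haveI : Epi (pullback.lift (a ≫ q) (b ≫ q) huu) := by
    rw [huvw]; exact epi_comp v w
  -- the two projections of the kernel pair of m agree
  have hfs : pullback.fst m m = pullback.snd m m := by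
    apply (cancel_epi (pullback.lift (a ≫ q) (b ≫ q) huu)).mp
    rw [pullback.lift_fst, pullback.lift_snd]
    exact coequalizer.condition a b
  -- hence m is mono
  haveI : Mono m := by
    constructor
    intro W x y hxy
    have h1 : pullback.lift x y hxy ≫ pullback.fst m m = x := pullback.lift_fst _ _ _
    have h2 : pullback.lift x y hxy ≫ pullback.snd m m = y := pullback.lift_snd _ _ _
    calc x = pullback.lift x y hxy ≫ pullback.fst m m := h1.symm
      _ = pullback.lift x y hxy ≫ pullback.snd m m := by rw [hfs]
      _ = y := h2
  -- m is a strong epi, hence iso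
  haveI : StrongEpi e := strongEpi_comp e₁ e₂
  haveI : StrongEpi (q ≫ m) := by rw [hqm]; infer_instance
  haveI : StrongEpi m := strongEpi_of_strongEpi q m
  haveI : IsIso m := isIso_of_mono_of_strongEpi m
  haveI : RegularEpi (q ≫ m) := regularEpiCompIso q m (coequalizerRegular a b)
  rw [← hqm]
  exact ⟨this⟩

end Aux

/-- In a regular category, the horizontal composite of two feeble pullback squares is a
feeble pullback square. -/
theorem feeble_pullback_paste {C : Type*} [Category C]
    [HasFiniteLimits C] (hcoeq : HasKernelPairCoequalizers C)
    (hstab : RegularEpisPullbackStable C)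
    {A B Cc A' B' C' : C} (f : A ⟶ B) (g : B ⟶ Cc)
    (α : A ⟶ A') (β : B ⟶ B') (γ : Cc ⟶ C') (f' : A' ⟶ B') (g' : B' ⟶ C')
    (h₁ : IsFeeblePullback f α β f') (h₂ : IsFeeblePullback g β γ g') :
    IsFeeblePullback (f ≫ g) α γ (f' ≫ g') := by
  obtain ⟨w₁, ⟨hr⟩⟩ := h₁
  obtain ⟨w₂, ⟨hqE⟩⟩ := h₂
  haveI := hr; haveI := hqE
  set r := pullback.lift f α w₁ with hrdef
  set q := pullback.lift g β w₂ with hqdef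
  have hb : q ≫ pullback.snd γ g' = β := pullback.lift_snd _ _ _
  have hqg : q ≫ pullback.fst γ g' = g := pullback.lift_fst _ _ _
  -- the comparison map t from `pullback β f'` to `S := pullback (pullback.snd γ g') f'`
  have htw : (pullback.fst β f' ≫ q) ≫ pullback.snd γ g' = pullback.snd β f' ≫ f' := by
    rw [Category.assoc, hb]; exact pullback.condition
  set t := pullback.lift (pullback.fst β f' ≫ q) (pullback.snd β f') htw with htdef
  have hbig : IsPullback (t ≫ pullback.snd (pullback.snd γ g') f') (pullback.fst β f') f'
      (q ≫ pullback.snd γ g') := by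
    rw [show t ≫ pullback.snd (pullback.snd γ g') f' = pullback.snd β f' from
      pullback.lift_snd _ _ _, hb]
    exact (IsPullback.of_hasPullback β f').flip
  have hPt : IsPullback t (pullback.fst β f') (pullback.fst (pullback.snd γ g') f') q :=
    hbig.of_right (pullback.lift_fst _ _ _)
      (IsPullback.of_hasPullback (pullback.snd γ g') f').flip
  obtain ⟨ht⟩ := regularEpi_of_isPullback hstab hPt hqE
  haveI := ht
  -- the pasted square is a pullback, giving an iso u from S to the outer pullback
  have hS : IsPullback
      (pullback.fst (pullback.snd γ g') f' ≫ pullback.fst γ g')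
      (pullback.snd (pullback.snd γ g') f') γ (f' ≫ g') :=
    (IsPullback.of_hasPullback (pullback.snd γ g') f').paste_horiz
      (IsPullback.of_hasPullback γ g')
  set u := hS.isoPullback.hom with hudef
  haveI : IsIso u := inferInstanceAs (IsIso hS.isoPullback.hom)
  have wcomm : (f ≫ g) ≫ γ = α ≫ f' ≫ g' := by
    rw [Category.assoc, w₂, ← Category.assoc, w₁, Category.assoc]
  have hfact : pullback.lift (f ≫ g) α wcomm = (r ≫ t) ≫ u := by
    apply pullback.hom_ext
    · rw [pullback.lift_fst, Category.assoc, Category.assoc, hudef,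
        hS.isoPullback_hom_fst]
      rw [← Category.assoc t, show t ≫ pullback.fst (pullback.snd γ g') f' =
        pullback.fst β f' ≫ q from pullback.lift_fst _ _ _]
      simp only [Category.assoc]
      rw [hqg, ← Category.assoc,
        show r ≫ pullback.fst β f' = f from pullback.lift_fst _ _ _]
    · rw [pullback.lift_snd, Category.assoc, Category.assoc, hudef,
        hS.isoPullback_hom_snd]
      rw [show t ≫ pullback.snd (pullback.snd γ g') f' = pullback.snd β f' from
        pullback.lift_snd _ _ _,
        show r ≫ pullback.snd β f' = α from pullback.lift_snd _ _ _]
  obtain ⟨hrt⟩ := regularEpi_comp_regularEpi hcoeq hstab r t hr ht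
  haveI := hrt
  haveI : RegularEpi ((r ≫ t) ≫ u) := regularEpiCompIso (r ≫ t) u hrt
  exact ⟨wcomm, ⟨by rw [hfact]; exact this⟩⟩
end

section
/- In a regular category, if the composite of two horizontally pasted commutative squares is a feeble pullback and the bottom morphism of the left-hand square is a regular epimorphism, then the right-hand square is a feeble pullback. -/
open CategoryTheory Limits

section Aux

variable {C : Type*} [Category C]

/-- Descend a morphism coequalizing the kernel pair through a regular epi. -/
theorem regularEpi_desc_kernelPair {X Y T : C} (f : X ⟶ Y) [HasPullback f f]
    (hf : RegularEpi f) (k : X ⟶ T)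
    (hk : pullback.fst f f ≫ k = pullback.snd f f ≫ k) :
    ∃ l : Y ⟶ T, f ≫ l = k := by
  haveI := hf
  have hcond : hf.left ≫ k = hf.right ≫ k := by
    have hm₁ : pullback.lift hf.left hf.right hf.w ≫
        pullback.fst f f ≫ k =
        pullback.lift hf.left hf.right hf.w ≫
        pullback.snd f f ≫ k := by rw [hk]
    simpa [pullback.lift_fst, pullback.lift_snd, pullback.lift_fst_assoc, pullback.lift_snd_assoc] using hm₁
  obtain ⟨l, hl⟩ := hf.desc' k hcond
  exact ⟨l, hl⟩

variable [HasPullbacks C]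

/-- Composition of regular epimorphisms is a regular epimorphism, given
pullback-stability of regular epimorphisms. -/
theorem regularEpi_comp_of_stable (hstab : RegularEpisPullbackStable C)
    {X Y Z : C} (e : X ⟶ Y) (f : Y ⟶ Z) (he : RegularEpi e) (hf : RegularEpi f) :
    Nonempty (RegularEpi (e ≫ f)) := by
  haveI := RegularEpi.epi _ he; haveI := RegularEpi.epi _ hf
  refine ⟨regularEpiOfKernelPair (e ≫ f) (Cofork.IsColimit.ofExistsUnique fun s => ?_)⟩
  have hs : pullback.fst (e ≫ f) (e ≫ f) ≫ s.π = pullback.snd (e ≫ f) (e ≫ f) ≫ s.π :=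
    s.condition
  -- kernel pair of e coequalizes s.π
  have hke : pullback.fst e e ≫ s.π = pullback.snd e e ≫ s.π := by
    have hw : pullback.fst e e ≫ (e ≫ f) = pullback.snd e e ≫ (e ≫ f) := by
      rw [← Category.assoc, ← Category.assoc, pullback.condition]
    have := congrArg (fun t => pullback.lift (pullback.fst e e) (pullback.snd e e) hw ≫ t) hs
    simpa [pullback.lift_fst, pullback.lift_snd, pullback.lift_fst_assoc, pullback.lift_snd_assoc] using this
  obtain ⟨y, hy⟩ := regularEpi_desc_kernelPair e he s.π hke
  -- kernel pair of f coequalizes y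
  set q₁ := pullback.fst f f with hq₁
  set q₂ := pullback.snd f f with hq₂
  -- pull back e along q₁, then along (that) ≫ q₂
  set W₁ := pullback q₁ e with hW₁
  set π₁ : W₁ ⟶ pullback f f := pullback.fst q₁ e with hπ₁
  set a₁ : W₁ ⟶ X := pullback.snd q₁ e with ha₁
  obtain ⟨r₁⟩ := hstab q₁ e he
  set Wt := pullback (π₁ ≫ q₂) e with hWt
  set π₂ : Wt ⟶ W₁ := pullback.fst (π₁ ≫ q₂) e with hπ₂
  set a₂ : Wt ⟶ X := pullback.snd (π₁ ≫ q₂) e with ha₂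
  obtain ⟨r₂⟩ := hstab (π₁ ≫ q₂) e he
  haveI := RegularEpi.epi _ r₁; haveI := RegularEpi.epi _ r₂
  have hcond₁ : π₁ ≫ q₁ = a₁ ≫ e := pullback.condition
  have hcond₂ : π₂ ≫ π₁ ≫ q₂ = a₂ ≫ e := pullback.condition
  have hwW : (π₂ ≫ a₁) ≫ (e ≫ f) = a₂ ≫ (e ≫ f) := by
    calc (π₂ ≫ a₁) ≫ e ≫ f = π₂ ≫ (a₁ ≫ e) ≫ f := by simp [Category.assoc]
    _ = π₂ ≫ (π₁ ≫ q₁) ≫ f := by rw [hcond₁]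
    _ = π₂ ≫ π₁ ≫ q₂ ≫ f := by
        rw [hq₁, hq₂]; simp only [Category.assoc, pullback.condition]
    _ = (π₂ ≫ π₁ ≫ q₂) ≫ f := by simp [Category.assoc]
    _ = (a₂ ≫ e) ≫ f := by rw [hcond₂]
    _ = a₂ ≫ e ≫ f := by simp [Category.assoc]
  have hWs : (π₂ ≫ a₁) ≫ s.π = a₂ ≫ s.π := by
    have := congrArg (fun t => pullback.lift (π₂ ≫ a₁) a₂ hwW ≫ t) hs
    simpa [pullback.lift_fst, pullback.lift_snd, pullback.lift_fst_assoc, pullback.lift_snd_assoc] using this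
  have hky : q₁ ≫ y = q₂ ≫ y := by
    have hepi : Epi (π₂ ≫ π₁) := epi_comp _ _
    rw [← cancel_epi (π₂ ≫ π₁)]
    calc (π₂ ≫ π₁) ≫ q₁ ≫ y = π₂ ≫ (π₁ ≫ q₁) ≫ y := by simp [Category.assoc]
    _ = π₂ ≫ (a₁ ≫ e) ≫ y := by rw [hcond₁]
    _ = (π₂ ≫ a₁) ≫ s.π := by rw [← hy]; simp [Category.assoc]
    _ = a₂ ≫ s.π := hWs
    _ = a₂ ≫ e ≫ y := by rw [hy]
    _ = (a₂ ≫ e) ≫ y := by simp [Category.assoc]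
    _ = (π₂ ≫ π₁ ≫ q₂) ≫ y := by rw [hcond₂]
    _ = (π₂ ≫ π₁) ≫ q₂ ≫ y := by simp [Category.assoc]
  obtain ⟨x, hx⟩ := regularEpi_desc_kernelPair f hf y hky
  haveI : Epi (e ≫ f) := epi_comp _ _
  have hfac : (e ≫ f) ≫ x = s.π := by rw [Category.assoc, hx, hy]
  refine ⟨x, by simpa using hfac, ?_⟩
  · intro x' hx'
    simp only [Cofork.π_ofπ] at hx'
    rw [← cancel_epi (e ≫ f), hfac, hx']

/-- Right cancellation: if `f ≫ u` is a regular epi, so is `u`, given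
pullback-stability of regular epimorphisms. -/
theorem regularEpi_of_comp_of_stable (hstab : RegularEpisPullbackStable C)
    {X Y Z : C} (f : X ⟶ Y) (u : Y ⟶ Z) (h : RegularEpi (f ≫ u)) :
    Nonempty (RegularEpi u) := by
  haveI := RegularEpi.epi _ h
  haveI hue : Epi u := by
    haveI : Epi (f ≫ u) := inferInstance
    exact epi_of_epi f u
  refine ⟨regularEpiOfKernelPair u (Cofork.IsColimit.ofExistsUnique fun s => ?_)⟩
  have hs : pullback.fst u u ≫ s.π = pullback.snd u u ≫ s.π := s.condition
  -- kernel pair of f ≫ u coequalizes f ≫ s.π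
  have hkh : pullback.fst (f ≫ u) (f ≫ u) ≫ f ≫ s.π =
      pullback.snd (f ≫ u) (f ≫ u) ≫ f ≫ s.π := by
    have hw : (pullback.fst (f ≫ u) (f ≫ u) ≫ f) ≫ u =
        (pullback.snd (f ≫ u) (f ≫ u) ≫ f) ≫ u := by
      simp only [Category.assoc]; exact pullback.condition
    have := congrArg
      (fun t => pullback.lift (pullback.fst (f ≫ u) (f ≫ u) ≫ f)
        (pullback.snd (f ≫ u) (f ≫ u) ≫ f) hw ≫ t) hs
    simpa [Category.assoc, pullback.lift_fst, pullback.lift_snd, pullback.lift_fst_assoc, pullback.lift_snd_assoc] using this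
  obtain ⟨x, hx⟩ := regularEpi_desc_kernelPair (f ≫ u) h (f ≫ s.π) hkh
  -- pull back f ≫ u along u
  obtain ⟨rV⟩ := hstab u (f ≫ u) h
  haveI := RegularEpi.epi _ rV
  set v₁ : pullback u (f ≫ u) ⟶ Y := pullback.fst u (f ≫ u) with hv₁
  set v₂ : pullback u (f ≫ u) ⟶ X := pullback.snd u (f ≫ u) with hv₂
  have hVc : v₁ ≫ u = v₂ ≫ f ≫ u := pullback.condition
  have hmw : (v₂ ≫ f) ≫ u = v₁ ≫ u := by rw [Category.assoc, ← hVc]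
  have hVs : (v₂ ≫ f) ≫ s.π = v₁ ≫ s.π := by
    have := congrArg (fun t => pullback.lift (v₂ ≫ f) v₁ hmw ≫ t) hs
    simpa [pullback.lift_fst, pullback.lift_snd, pullback.lift_fst_assoc, pullback.lift_snd_assoc] using this
  have hux : u ≫ x = s.π := by
    rw [← cancel_epi v₁]
    calc v₁ ≫ u ≫ x = (v₁ ≫ u) ≫ x := by simp [Category.assoc]
    _ = (v₂ ≫ f ≫ u) ≫ x := by rw [hVc]
    _ = v₂ ≫ (f ≫ u) ≫ x := by simp [Category.assoc]
    _ = v₂ ≫ f ≫ s.π := by rw [hx]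
    _ = (v₂ ≫ f) ≫ s.π := by simp [Category.assoc]
    _ = v₁ ≫ s.π := hVs
  refine ⟨x, by simpa using hux, ?_⟩
  intro x' hx'
  simp only [Cofork.π_ofπ] at hx'
  rw [← cancel_epi u, hux, hx']

end Aux

/-- In a regular category, if the composite of two horizontally pasted commutative
squares is a feeble pullback and the bottom morphism of the left-hand square is a
regular epimorphism, then the right-hand square is a feeble pullback. -/
theorem feeble_pullback_right_of_comp {C : Type*} [Category C]
    [HasFiniteLimits C] (hcoeq : HasKernelPairCoequalizers C)
    (hstab : RegularEpisPullbackStable C)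
    {A B Cc A' B' C' : C} (f : A ⟶ B) (g : B ⟶ Cc)
    (α : A ⟶ A') (β : B ⟶ B') (γ : Cc ⟶ C') (f' : A' ⟶ B') (g' : B' ⟶ C')
    (w₁ : f ≫ β = α ≫ f') (w₂ : g ≫ γ = β ≫ g')
    (hcomp : IsFeeblePullback (f ≫ g) α γ (f' ≫ g')) (hf' : RegularEpi f') :
    IsFeeblePullback g β γ g' := by
  obtain ⟨w, ⟨he⟩⟩ := hcomp
  haveI := he
  refine ⟨w₂, ?_⟩
  set u : B ⟶ pullback γ g' := pullback.lift g β w₂ with hu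
  have huq₁ : u ≫ pullback.fst γ g' = g := pullback.lift_fst _ _ _
  have huq₂ : u ≫ pullback.snd γ g' = β := pullback.lift_snd _ _ _
  set q₂ : pullback γ g' ⟶ B' := pullback.snd γ g' with hq₂
  -- R := pullback of f' along q₂; its first projection is a regular epi
  set ρ₁ : pullback q₂ f' ⟶ pullback γ g' := pullback.fst q₂ f' with hρ₁
  set ρ₂ : pullback q₂ f' ⟶ A' := pullback.snd q₂ f' with hρ₂
  obtain ⟨rρ⟩ := hstab q₂ f' hf'
  haveI := rρ
  -- comparison map c : A ⟶ R
  have hcw : (f ≫ u) ≫ q₂ = α ≫ f' := by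
    rw [Category.assoc, hq₂, huq₂, w₁]
  set c : A ⟶ pullback q₂ f' := pullback.lift (f ≫ u) α hcw with hc
  -- the pasting iso ψ : pullback γ (f' ≫ g') ⟶ R an iso, with e ≫ ψ = c
  have hψw₀ : pullback.fst γ (f' ≫ g') ≫ γ =
      (pullback.snd γ (f' ≫ g') ≫ f') ≫ g' := by
    rw [Category.assoc]; exact pullback.condition
  set ψ : pullback γ (f' ≫ g') ⟶ pullback q₂ f' :=
    pullback.lift
      (pullback.lift (pullback.fst γ (f' ≫ g')) (pullback.snd γ (f' ≫ g') ≫ f') hψw₀)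
      (pullback.snd γ (f' ≫ g'))
      (by rw [hq₂, pullback.lift_snd]) with hψ
  have hφw : (ρ₁ ≫ pullback.fst γ g') ≫ γ = ρ₂ ≫ f' ≫ g' := by
    rw [Category.assoc, pullback.condition (f := γ) (g := g'), ← Category.assoc,
      ← hq₂, pullback.condition (f := q₂) (g := f'), hρ₂, Category.assoc]
  set φ : pullback q₂ f' ⟶ pullback γ (f' ≫ g') :=
    pullback.lift (ρ₁ ≫ pullback.fst γ g') ρ₂ hφw with hφ
  haveI : IsIso ψ := by
    refine ⟨φ, ?_, ?_⟩
    · apply pullback.hom_ext <;> simp [hψ, hφ, hρ₁, hρ₂, pullback.lift_fst, pullback.lift_snd, pullback.lift_fst_assoc, pullback.lift_snd_assoc]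
    · apply pullback.hom_ext
      · rw [hq₂] at *
        apply pullback.hom_ext <;>
          simp [hψ, hφ, hρ₁, hρ₂, Category.assoc, pullback.condition, pullback.lift_fst, pullback.lift_snd, pullback.lift_fst_assoc, pullback.lift_snd_assoc] <;>
            exact pullback.condition.symm
      · simp [hψ, hφ, hρ₂, pullback.lift_fst, pullback.lift_snd, pullback.lift_fst_assoc, pullback.lift_snd_assoc]
  -- e ≫ ψ = c
  have heψ : pullback.lift (f ≫ g) α w ≫ ψ = c := by
    apply pullback.hom_ext
    · rw [hρ₁] at *
      apply pullback.hom_ext <;>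
        simp [hψ, hc, hu, huq₁, huq₂, hq₂, Category.assoc, w₁, pullback.lift_fst, pullback.lift_snd, pullback.lift_fst_assoc, pullback.lift_snd_assoc]
    · simp [hψ, hc, hρ₂, pullback.lift_fst, pullback.lift_snd, pullback.lift_fst_assoc, pullback.lift_snd_assoc]
  -- hence c is a regular epi
  have hψre : RegularEpi ψ := RegularEpi.ofIso (asIso ψ)
  obtain ⟨hcre⟩ := regularEpi_comp_of_stable hstab (pullback.lift (f ≫ g) α w) ψ he
    hψre
  rw [heψ] at hcre
  -- c ≫ ρ₁ = f ≫ u is a regular epi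
  obtain ⟨hfu⟩ := regularEpi_comp_of_stable hstab c ρ₁ hcre rρ
  have hcρ : c ≫ ρ₁ = f ≫ u := by rw [hc, hρ₁, pullback.lift_fst]
  rw [hcρ] at hfu
  exact regularEpi_of_comp_of_stable hstab f u hfu
end

section
/- In a pointed finitely complete category with finite coproducts in which binary coproducts of pullback squares are pullbacks, for any coproduct inclusion ι₂ : S → A+S and any monomorphism n : S → B, the square with top n : S → B, left ι₂ : S → A+S, bottom 1_A + n : A+S → A+B, right ι₂ : B → A+B is both a pushout and a pullback, and 1_A + n is a monomorphism. -/
open CategoryTheory Limits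

/-- In a pointed finitely complete category with finite coproducts in which binary
coproducts of pullback squares are pullback squares, for any coproduct inclusion
`ι₂ : S ⟶ A+S` and any monomorphism `n : S ⟶ B`, the square with top `n : S ⟶ B`, left
`ι₂ : S ⟶ A+S`, right `ι₂ : B ⟶ A+B` and bottom `1_A + n : A+S ⟶ A+B` is both a
pushout and a pullback, and `1_A + n` is a monomorphism. -/
theorem pushout_of_mono_along_coprod_inclusion {C : Type*} [Category C]
    [HasZeroObject C] [HasFiniteLimits C] [HasFiniteCoproducts C]
    (hco : CoprodOfPullbacksIsPullback C)
    {S A B : C} (n : S ⟶ B) [Mono n] :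
    IsPushout n (coprod.inr : S ⟶ A ⨿ S) (coprod.inr : B ⟶ A ⨿ B)
        (coprod.map (𝟙 A) n) ∧
      IsPullback n (coprod.inr : S ⟶ A ⨿ S) (coprod.inr : B ⟶ A ⨿ B)
        (coprod.map (𝟙 A) n) ∧
      Mono (coprod.map (𝟙 A) n) := by
  refine ⟨?_, ?_, ?_⟩
  · -- Pushout: direct construction
    refine IsPushout.of_isColimit' ⟨by simp⟩ ?_
    refine PushoutCocone.IsColimit.mk _
      (fun s => coprod.desc (coprod.inl ≫ s.inr) s.inl) ?_ ?_ ?_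
    · intro s; erw [coprod.inr_desc]
    · intro s
      apply coprod.hom_ext
      · simp; erw [coprod.inl_desc]
      · simp; erw [coprod.inr_desc]; exact s.condition
    · intro s m h₁ h₂
      apply coprod.hom_ext
      · have this : (coprod.inl : A ⟶ A ⨿ S) ≫ coprod.map (𝟙 A) n = coprod.inl := by simp
        rw [coprod.inl_desc, ← h₂, ← Category.assoc, this]
      · erw [coprod.inr_desc]; exact h₁
  · -- Pullback: coproduct of two pullback squares
    have p1 : IsPullback (𝟙 (⊥_ C)) (initial.to A) (initial.to A) (𝟙 A) :=
      IsPullback.of_horiz_isIso ⟨by apply Limits.initial.hom_ext⟩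
    have p2 : IsPullback n (𝟙 S) (𝟙 B) n := IsPullback.of_id_snd
    have sq := hco _ _ _ _ _ _ _ _ p1 p2
    refine sq.of_iso
      (Iso.mk (coprod.desc (initial.to S) (𝟙 S)) coprod.inr
        (coprod.hom_ext (by simp; apply Limits.initial.hom_ext) (by simp; erw [coprod.inr_desc])) (by erw [coprod.inr_desc]))
      (Iso.mk (coprod.desc (initial.to B) (𝟙 B)) coprod.inr
        (coprod.hom_ext (by simp; apply Limits.initial.hom_ext) (by simp; erw [coprod.inr_desc])) (by erw [coprod.inr_desc]))
      (Iso.refl _) (Iso.refl _) ?_ ?_ ?_ ?_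
    · apply coprod.hom_ext
      · simp
      · simp
    · apply coprod.hom_ext
      · simp; apply Limits.initial.hom_ext
      · simp; erw [coprod.inr_desc]
    · apply coprod.hom_ext
      · simp; apply Limits.initial.hom_ext
      · simp; erw [coprod.inr_desc]
    · simp
  · -- Mono
    have pA : IsPullback (𝟙 A) (𝟙 A) (𝟙 A) (𝟙 A) := IsPullback.of_id_snd
    have pn : IsPullback (𝟙 S) (𝟙 S) n n := IsKernelPair.id_of_mono n
    have pb := hco _ _ _ _ _ _ _ _ pA pn
    rw [coprod.map_id_id] at pb
    constructor
    intro W u v h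
    have hu := pb.lift_fst u v h
    have hv := pb.lift_snd u v h
    rw [Category.comp_id] at hu hv
    exact hu.symm.trans hv
end
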